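/- Let G = (V, E) be a finite simple graph and let K = {x : V → ℝ | ∀ v ∈ V, 0 ≤ x_v ≤ 1, and ∀ uv ∈ E, x_u + x_v ≥ 1} be the feasible region of the vertex-cover LP. Then every extreme point x of K is half-integral: x_v ∈ {0, 1/2, 1} for all v ∈ V. -/

import Mathlib

set_option maxHeartbeats 1000000


def LPFeasible {V : Type*} [Fintype V] (G : SimpleGraph V) (x : V → ℝ) : Prop :=
  (∀ v, 0 ≤ x v ∧ x v ≤ 1) ∧ ∀ u v, G.Adj u v → 1 ≤ x u + x v

noncomputable def LPValue {V : Type*} [Fintype V] (x : V → ℝ) : ℝ := ∑ v, x v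

def LPOptimal {V : Type*} [Fintype V] (G : SimpleGraph V) (x : V → ℝ) : Prop :=
  LPFeasible G x ∧ ∀ y : V → ℝ, LPFeasible G y → LPValue x ≤ LPValue y

def HalfIntegral {V : Type*} (x : V → ℝ) : Prop :=
  ∀ v, x v = 0 ∨ x v = 1/2 ∨ x v = 1

def IsVertexCover {V : Type*} [Fintype V] (G : SimpleGraph V) (C : Finset V) : Prop :=
  ∀ u v, G.Adj u v → u ∈ C ∨ v ∈ C

/-- Every extreme point of the vertex-cover LP is half-integral. -/
theorem extreme_points_half_integral {V : Type*} [Fintype V] (G : SimpleGraph V) :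
    ∀ x ∈ Set.extremePoints ℝ {x : V → ℝ | LPFeasible G x},
      ∀ v, x v = 0 ∨ x v = 1/2 ∨ x v = 1 := by
  rintro x ⟨hxK, hext⟩ v
  by_contra hv
  push_neg at hv
  obtain ⟨hv0, hvh, hv1⟩ := hv
  obtain ⟨hub, hedge⟩ := hxK
  have : Nonempty V := ⟨v⟩
  set d : V → ℝ := fun u =>
    if 0 < x u ∧ x u < 1/2 then -1 else if 1/2 < x u ∧ x u < 1 then 1 else 0 with hd_def
  set b : V → ℝ := fun u =>
    if 0 < x u ∧ x u < 1/2 then min (x u) (1/2 - x u)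
    else if 1/2 < x u ∧ x u < 1 then min (x u - 1/2) (1 - x u) else 1/2 with hb_def
  set ε : ℝ := Finset.univ.inf' Finset.univ_nonempty b with hε_def
  have hεb : ∀ u, ε ≤ b u := fun u => Finset.inf'_le _ (Finset.mem_univ u)
  have hεpos : 0 < ε := by
    rw [hε_def, Finset.lt_inf'_iff]
    intro u _
    simp only [hb_def]
    split_ifs with h1 h2
    · exact lt_min h1.1 (by linarith [h1.2])
    · exact lt_min (by linarith [h2.1]) (by linarith [h2.2])
    · norm_num
  have hd : ∀ u, (d u = -1 ∧ 0 < x u ∧ x u < 1/2 ∧ ε ≤ x u ∧ ε ≤ 1/2 - x u) ∨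
      (d u = 1 ∧ 1/2 < x u ∧ x u < 1 ∧ ε ≤ x u - 1/2 ∧ ε ≤ 1 - x u) ∨
      (d u = 0 ∧ (x u = 0 ∨ x u = 1/2 ∨ x u = 1)) := by
    intro u
    have hb := hεb u
    obtain ⟨hl, hr⟩ := hub u
    simp only [hd_def, hb_def] at hb ⊢
    split_ifs at hb ⊢ with h1 h2
    · exact Or.inl ⟨rfl, h1.1, h1.2, (le_min_iff.mp hb).1, (le_min_iff.mp hb).2⟩
    · exact Or.inr (Or.inl ⟨rfl, h2.1, h2.2, (le_min_iff.mp hb).1, (le_min_iff.mp hb).2⟩)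
    · refine Or.inr (Or.inr ⟨rfl, ?_⟩)
      push_neg at h1 h2
      rcases lt_trichotomy (x u) (1/2) with h | h | h
      · left
        by_contra hc
        have hx0 : 0 < x u := lt_of_le_of_ne hl (Ne.symm hc)
        linarith [h1 hx0]
      · right; left; exact h
      · right; right; linarith [h2 h]
  have hdv : d v ≠ 0 := by
    rcases hd v with ⟨h, _⟩ | ⟨h, _⟩ | ⟨_, h⟩
    · rw [h]; norm_num
    · rw [h]; norm_num
    · rcases h with h | h | h <;> exact absurd h (by assumption)
  set y : V → ℝ := fun u => x u + ε * d u with hy_def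
  set z : V → ℝ := fun u => x u - ε * d u with hz_def
  have hbnd : ∀ u, (0 ≤ y u ∧ y u ≤ 1) ∧ (0 ≤ z u ∧ z u ≤ 1) := by
    intro u
    obtain ⟨hl, hr⟩ := hub u
    simp only [hy_def, hz_def]
    rcases hd u with ⟨h, h1, h2, h3, h4⟩ | ⟨h, h1, h2, h3, h4⟩ | ⟨h, _⟩ <;>
      rw [h] <;> constructor <;> constructor <;> nlinarith
  have hedgekey : ∀ u w, G.Adj u w → ε * (d u + d w) ≤ x u + x w - 1 ∧
      -(ε * (d u + d w)) ≤ x u + x w - 1 := by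
    intro u w hadj
    have h := hedge u w hadj
    rcases hd u with ⟨hu, hu1, hu2, hu3, hu4⟩ | ⟨hu, hu1, hu2, hu3, hu4⟩ | ⟨hu, hu0⟩ <;>
      rcases hd w with ⟨hw, hw1, hw2, hw3, hw4⟩ | ⟨hw, hw1, hw2, hw3, hw4⟩ | ⟨hw, hw0⟩ <;>
      rw [hu, hw] <;>
      [skip; skip; rcases hw0 with h0 | h0 | h0; skip; skip;
       rcases hw0 with h0 | h0 | h0; rcases hu0 with h0 | h0 | h0;
       rcases hu0 with h0 | h0 | h0; rcases hu0 with h0 | h0 | h0] <;>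
      constructor <;> ring_nf <;> nlinarith [hεpos.le]
  have hyK : LPFeasible G y := by
    refine ⟨fun u => (hbnd u).1, fun u w hadj => ?_⟩
    have := (hedgekey u w hadj).2
    simp only [hy_def]; nlinarith
  have hzK : LPFeasible G z := by
    refine ⟨fun u => (hbnd u).2, fun u w hadj => ?_⟩
    have := (hedgekey u w hadj).1
    simp only [hz_def]; nlinarith
  have hmem : x ∈ openSegment ℝ y z := by
    refine ⟨1/2, 1/2, by norm_num, by norm_num, by norm_num, ?_⟩
    funext u
    simp only [hy_def, hz_def, Pi.add_apply, Pi.smul_apply, smul_eq_mul]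
    ring
  have := hext hyK hzK hmem
  have hfv := congrFun this v
  simp only [hy_def] at hfv
  have : ε * d v = 0 := by linarith
  rcases mul_eq_zero.mp this with h | h
  · exact absurd h (ne_of_gt hεpos)
  · exact hdv h
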